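/- Let G be the group ℝ × ℝ² × ℝ with multiplication (a,(v₁,v₂),z)·(a',(v'₁,v'₂),z') := (a+a', (v₁+e^{2a}v'₁, v₂+e^{−2a}v'₂), z+z'+(1/2)(v₁e^{−2a}v'₂ − v₂e^{2a}v'₁)). Define ι_S(a,n) := (a, (e^{2a}n, 0), 0) and ι_*(ν,κ) := (ν, (−κe^{2ν}, (e^{−2ν}−1)/2), −κ(1+e^{2ν})/4), both elements of G. Then for all a, n, ν, κ ∈ ℝ with 1 + e^{−2a}(e^{−2ν}−1) > 0, there exist ā, n̄ ∈ ℝ such that ι_S(a,n)·ι_*(ν,κ) = ι_*(ν̄,κ̄)·ι_S(ā,n̄), where ν̄ := −(1/2)·log(1 + e^{−2a}(e^{−2ν}−1)) and κ̄ := κ − n(e^{−2ν}−1). -/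

import Mathlib

noncomputable section

/-- The underlying set `ℝ × ℝ² × ℝ` of the double group of the `ax+b` group. -/
abbrev Dbl := ℝ × (ℝ × ℝ) × ℝ

/-- The product of the double group. -/
def dmul (x y : Dbl) : Dbl :=
  (x.1 + y.1,
   (x.2.1.1 + Real.exp (2 * x.1) * y.2.1.1,
    x.2.1.2 + Real.exp (-2 * x.1) * y.2.1.2),
   x.2.2 + y.2.2 + (1 / 2) * (x.2.1.1 * Real.exp (-2 * x.1) * y.2.1.2
      - x.2.1.2 * Real.exp (2 * x.1) * y.2.1.1))

/-- The embedding `ι_S(a,n) = (a, (e^{2a}n, 0), 0)` of the `ax+b` group into the double. -/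
def iotaS (a n : ℝ) : Dbl :=
  (a, (Real.exp (2 * a) * n, 0), 0)

/-- The embedding `ι_*(ν,κ) = (ν, (−κe^{2ν}, (e^{−2ν}−1)/2), −κ(1+e^{2ν})/4)` of the dual
group into the double. -/
def iotaStar (ν κ : ℝ) : Dbl :=
  (ν, (-κ * Real.exp (2 * ν), (Real.exp (-2 * ν) - 1) / 2),
   -κ * (1 + Real.exp (2 * ν)) / 4)

/-- the local dressing decomposition: whenever
`1 + e^{−2a}(e^{−2ν}−1) > 0` there are `ā, n̄` with
`ι_S(a,n)·ι_*(ν,κ) = ι_*(ν̄,κ̄)·ι_S(ā,n̄)` where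
`ν̄ = −(1/2)log(1 + e^{−2a}(e^{−2ν}−1))` and `κ̄ = κ − n(e^{−2ν}−1)`. -/
theorem local_dressing_decomposition (a n ν κ : ℝ)
    (hpos : 1 + Real.exp (-2 * a) * (Real.exp (-2 * ν) - 1) > 0) :
    ∃ abar nbar : ℝ,
      dmul (iotaS a n) (iotaStar ν κ) =
        dmul
          (iotaStar
            (-(1 / 2) * Real.log (1 + Real.exp (-2 * a) * (Real.exp (-2 * ν) - 1)))
            (κ - n * (Real.exp (-2 * ν) - 1)))
          (iotaS abar nbar) := by
  have hA : Real.exp (-2 * a) = (Real.exp (2 * a))⁻¹ := by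
    rw [show (-2 : ℝ) * a = -(2 * a) by ring, Real.exp_neg]
  have hB : Real.exp (-2 * ν) = (Real.exp (2 * ν))⁻¹ := by
    rw [show (-2 : ℝ) * ν = -(2 * ν) by ring, Real.exp_neg]
  set A := Real.exp (2 * a) with hAdef
  set B := Real.exp (2 * ν) with hBdef
  have hA0 : A ≠ 0 := Real.exp_ne_zero _
  have hB0 : B ≠ 0 := Real.exp_ne_zero _
  set P : ℝ := 1 + Real.exp (-2 * a) * (Real.exp (-2 * ν) - 1) with hPdef
  have hP0 : P ≠ 0 := ne_of_gt hpos
  have e1 : Real.exp (2 * (-(1 / 2) * Real.log P)) = P⁻¹ := by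
    rw [show 2 * (-(1 / 2) * Real.log P) = -Real.log P by ring, Real.exp_neg,
      Real.exp_log hpos]
  have e2 : Real.exp (-2 * (-(1 / 2) * Real.log P)) = P := by
    rw [show -2 * (-(1 / 2) * Real.log P) = Real.log P by ring, Real.exp_log hpos]
  refine ⟨a + ν + (1 / 2) * Real.log P,
    B⁻¹ * n - κ + (κ - n * (B⁻¹ - 1)) * A⁻¹ * B⁻¹ / P, ?_⟩
  have e3 : Real.exp (2 * (a + ν + (1 / 2) * Real.log P)) = A * B * P := by
    rw [show 2 * (a + ν + (1 / 2) * Real.log P) = 2 * a + 2 * ν + Real.log P by ring,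
      Real.exp_add, Real.exp_add, Real.exp_log hpos, hAdef, hBdef]
  have e4 : Real.exp (-2 * (a + ν + (1 / 2) * Real.log P)) = A⁻¹ * B⁻¹ * P⁻¹ := by
    rw [show -2 * (a + ν + (1 / 2) * Real.log P) = -(2 * a + 2 * ν + Real.log P) by ring,
      Real.exp_neg, Real.exp_add, Real.exp_add, Real.exp_log hpos, hAdef, hBdef,
      mul_inv, mul_inv]
  have hPA : P = (A * B + 1 - B) / (A * B) := by
    rw [hPdef, hA, hB]; field_simp; ring
  have hD0 : A * B + 1 - B ≠ 0 := by
    intro h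
    exact hP0 (by rw [hPA, h, zero_div])
  have hD0' : B * A + 1 - B ≠ 0 := by rwa [mul_comm B A]
  simp only [dmul, iotaS, iotaStar, Prod.mk.injEq, e1, e2, e3, e4, hA, hB, ← hAdef, ← hBdef]
  refine ⟨by ring, ⟨?_, ?_⟩, ?_⟩ <;> rw [hPA] <;> field_simp <;> ring

end
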